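/- Let R be a commutative noetherian ring, I an ideal of R, and S₁, S₂ Serre classes of R-modules. Suppose that the extension class (S₁, S₂) is a Serre class and that the extension class (S₂, S₁) satisfies condition (C_I). Then (S₁, S₂) satisfies condition (C_I): for every R-module M such that every element of M is annihilated by some power of I and such that the submodule (0 :_M I) = {x ∈ M | I·x = 0} belongs to (S₁, S₂), the module M belongs to (S₁, S₂). -/

import Mathlib

universe u v

/-- The extension class `(S₁, S₂)`: modules `M` admitting a submodule `N ∈ S₁` with `M/N ∈ S₂`. -/
def ExtensionClass {R : Type u} [CommRing R]
    (S₁ S₂ : ∀ (M : Type v) [AddCommGroup M] [Module R M], Prop)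
    (M : Type v) [AddCommGroup M] [Module R M] : Prop :=
  ∃ N : Submodule R M, S₁ N ∧ S₂ (M ⧸ N)

/-- A Serre class of `R`-modules. -/
structure IsSerreClass (R : Type u) [CommRing R]
    (S : ∀ (M : Type v) [AddCommGroup M] [Module R M], Prop) : Prop where
  isoClosed : ∀ (M N : Type v) [AddCommGroup M] [Module R M] [AddCommGroup N] [Module R N],
      (M ≃ₗ[R] N) → S M → S N
  zeroMem : ∀ (M : Type v) [AddCommGroup M] [Module R M], Subsingleton M → S M
  subClosed : ∀ (M : Type v) [AddCommGroup M] [Module R M] (N : Submodule R M), S M → S N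
  quotClosed : ∀ (M : Type v) [AddCommGroup M] [Module R M] (N : Submodule R M), S M → S (M ⧸ N)
  extClosed : ∀ (L M N : Type v) [AddCommGroup L] [Module R L] [AddCommGroup M] [Module R M]
      [AddCommGroup N] [Module R N] (f : L →ₗ[R] M) (g : M →ₗ[R] N),
      Function.Injective f → Function.Surjective g →
      LinearMap.range f = LinearMap.ker g → S L → S N → S M

/-- A class `X` of `R`-modules satisfies condition `(C_I)`: whenever every element of `M` is
annihilated by some power of `I` and the submodule `(0 :_M I)` belongs to `X`,
then `M` belongs to `X`. -/
def SatisfiesCondC {R : Type u} [CommRing R] (I : Ideal R)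
    (X : ∀ (M : Type v) [AddCommGroup M] [Module R M], Prop) : Prop :=
  ∀ (M : Type v) [AddCommGroup M] [Module R M],
    (∀ x : M, ∃ n : ℕ, ∀ r ∈ I ^ n, r • x = 0) →
    ∀ K : Submodule R M, (∀ x : M, x ∈ K ↔ ∀ r ∈ I, r • x = 0) →
    X K → X M

lemma IsSerreClass.piFin {R : Type u} [CommRing R]
    {S : ∀ (M : Type v) [AddCommGroup M] [Module R M], Prop} (hS : IsSerreClass R S)
    (A : Type v) [AddCommGroup A] [Module R A] (hA : S A) :
    ∀ t : ℕ, S (Fin t → A) := by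
  intro t
  induction t with
  | zero => exact hS.zeroMem _ ⟨fun a b => funext fun i => i.elim0⟩
  | succ n ih =>
    refine hS.extClosed A (Fin (n+1) → A) (Fin n → A)
      (LinearMap.single R (fun _ : Fin (n+1) => A) 0)
      (LinearMap.funLeft R A Fin.succ) ?_ ?_ ?_ hA ih
    · intro a b h
      simpa using congrFun h 0
    · exact LinearMap.funLeft_surjective_of_injective R A _ (Fin.succ_injective n)
    · ext x
      simp only [LinearMap.mem_range, LinearMap.mem_ker]
      constructor
      · rintro ⟨a, rfl⟩
        ext i
        exact Pi.single_eq_of_ne (M := fun _ : Fin (n+1) => A) (Fin.succ_ne_zero i) a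
      · intro h
        refine ⟨x 0, funext fun i => ?_⟩
        refine Fin.cases ?_ (fun j => ?_) i
        · simp
        · have := congrFun h j
          simp only [LinearMap.funLeft_apply, Function.comp] at this
          simp [Pi.single_eq_of_ne (Fin.succ_ne_zero j), this]

/-- If the extension class `(S₁, S₂)` is a Serre class and `(S₂, S₁)` satisfies condition
`(C_I)`, then `(S₁, S₂)` satisfies condition `(C_I)`. -/
theorem extensionClass_satisfiesCondC
    {R : Type u} [CommRing R] [IsNoetherianRing R] (I : Ideal R)
    (S₁ S₂ : ∀ (M : Type v) [AddCommGroup M] [Module R M], Prop)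
    (h₁ : IsSerreClass R S₁) (h₂ : IsSerreClass R S₂)
    (hSerre : IsSerreClass R (ExtensionClass S₁ S₂))
    (hC : SatisfiesCondC I (ExtensionClass S₂ S₁)) :
    SatisfiesCondC I (ExtensionClass S₁ S₂) := by
  intro M _ _ htor K hKchar hKmem
  obtain ⟨N', hN'1, hN'2⟩ := hKmem
  set N : Submodule R M := N'.map K.subtype with hNdef
  have hNK : N ≤ K := by
    rintro x ⟨y, hy, rfl⟩; exact y.2
  have hS1N : S₁ N :=
    h₁.isoClosed _ _ (Submodule.equivMapOfInjective K.subtype K.injective_subtype N') hN'1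
  -- the submodule of elements x with I • x ⊆ N
  set Kbig : Submodule R M :=
    { carrier := {x | ∀ r ∈ I, r • x ∈ N}
      add_mem' := fun {a b} ha hb r hr => by
        rw [smul_add]; exact N.add_mem (ha r hr) (hb r hr)
      zero_mem' := fun r hr => by rw [smul_zero]; exact N.zero_mem
      smul_mem' := fun c x hx r hr => by
        rw [smul_comm]; exact N.smul_mem c (hx r hr) } with hKbigdef
  have hKbigmem : ∀ x : M, x ∈ Kbig ↔ ∀ r ∈ I, r • x ∈ N := fun _ => Iff.rfl
  have hKKbig : K ≤ Kbig := by
    intro x hx r hr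
    rw [(hKchar x).1 hx r hr]; exact N.zero_mem
  -- the quotient Q = M / N
  set Q := M ⧸ N with hQdef
  set K₂ : Submodule R Q := Kbig.map N.mkQ with hK₂def
  set P₀ : Submodule R Q := K.map N.mkQ with hP₀def
  have htorQ : ∀ y : Q, ∃ n : ℕ, ∀ r ∈ I ^ n, r • y = 0 := by
    intro y
    obtain ⟨x, rfl⟩ := N.mkQ_surjective y
    obtain ⟨n, hn⟩ := htor x
    exact ⟨n, fun r hr => by rw [← map_smul, hn r hr, map_zero]⟩
  have hK₂char : ∀ y : Q, y ∈ K₂ ↔ ∀ r ∈ I, r • y = 0 := by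
    intro y
    constructor
    · rintro ⟨x, hx, rfl⟩ r hr
      rw [← map_smul]
      exact (Submodule.Quotient.mk_eq_zero N).2 (hx r hr)
    · intro h
      obtain ⟨x, rfl⟩ := N.mkQ_surjective y
      refine ⟨x, fun r hr => ?_, rfl⟩
      have := h r hr
      rw [← map_smul] at this
      exact (Submodule.Quotient.mk_eq_zero N).1 this
  have hP₀K₂ : P₀ ≤ K₂ := Submodule.map_mono hKKbig
  set P₁ : Submodule R K₂ := P₀.comap K₂.subtype with hP₁def
  -- S₂ P₁
  have hS2P₁ : S₂ P₁ := by
    set f : K →ₗ[R] Q := N.mkQ ∘ₗ K.subtype with hfdef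
    have hker : LinearMap.ker f = N' := by
      rw [hfdef, LinearMap.ker_comp, Submodule.ker_mkQ, hNdef,
        Submodule.comap_map_eq, Submodule.ker_subtype, sup_bot_eq]
    have hrange : LinearMap.range f = P₀ := by
      rw [hfdef, LinearMap.range_comp, Submodule.range_subtype]
    have e1 : (K ⧸ N') ≃ₗ[R] (K ⧸ LinearMap.ker f) := Submodule.quotEquivOfEq _ _ hker.symm
    have e2 := f.quotKerEquivRange
    have e3 : (LinearMap.range f : Type v) ≃ₗ[R] P₀ := LinearEquiv.ofEq _ _ hrange
    have e4 : (P₀ : Type v) ≃ₗ[R] P₁ := (Submodule.comapSubtypeEquivOfLe hP₀K₂).symm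
    exact h₂.isoClosed _ _ (((e1.trans e2).trans e3).trans e4) hN'2
  -- S₁ (K₂ ⧸ P₁)
  have hS1quot : S₁ (K₂ ⧸ P₁) := by
    set g1 : Kbig →ₗ[R] K₂ :=
      LinearMap.codRestrict K₂ (N.mkQ ∘ₗ Kbig.subtype) (fun x => ⟨x.1, x.2, rfl⟩) with hg1def
    set g : Kbig →ₗ[R] (K₂ ⧸ P₁) := P₁.mkQ ∘ₗ g1 with hgdef
    have hg1surj : Function.Surjective g1 := by
      rintro ⟨y, x, hx, rfl⟩
      exact ⟨⟨x, hx⟩, rfl⟩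
    have hgsurj : Function.Surjective g := (P₁.mkQ_surjective).comp hg1surj
    have hcomap : P₀.comap N.mkQ = K := by
      rw [hP₀def, Submodule.comap_map_eq, Submodule.ker_mkQ, sup_eq_left.2 hNK]
    have hgker : LinearMap.ker g = K.comap Kbig.subtype := by
      ext x
      simp only [hgdef, LinearMap.mem_ker, LinearMap.comp_apply, Submodule.mem_comap]
      rw [Submodule.mkQ_apply, Submodule.Quotient.mk_eq_zero]
      change (g1 x : Q) ∈ P₀ ↔ _
      rw [hg1def]
      change N.mkQ x.1 ∈ P₀ ↔ _
      rw [← Submodule.mem_comap, hcomap]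
      rfl
    -- generators of I
    obtain ⟨t, r, hrspan⟩ := Submodule.fg_iff_exists_fin_generating_family.1
      (IsNoetherian.noetherian I)
    have hrI : ∀ i, r i ∈ I := fun i => hrspan ▸ Submodule.subset_span ⟨i, rfl⟩
    set ψ : Kbig →ₗ[R] (Fin t → N) :=
      { toFun := fun x => fun i => ⟨r i • (x : M), x.2 (r i) (hrI i)⟩
        map_add' := fun a b => by
          funext i; apply Subtype.ext; simp [smul_add]
        map_smul' := fun c a => by
          funext i; apply Subtype.ext
          simp [smul_comm (r i) c] } with hψdef
    have hψker : LinearMap.ker ψ = LinearMap.ker g := by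
      rw [hgker]
      ext x
      simp only [LinearMap.mem_ker, Submodule.mem_comap, Submodule.subtype_apply]
      constructor
      · intro h
        rw [hKchar]
        intro s hs
        rw [← hrspan] at hs
        induction hs using Submodule.span_induction with
        | mem y hy =>
          obtain ⟨i, rfl⟩ := hy
          have := congrFun h i
          exact congrArg Subtype.val this
        | zero => rw [zero_smul]
        | add a b _ _ ha hb => rw [add_smul, ha, hb, add_zero]
        | smul c a _ ha => rw [smul_assoc, ha, smul_zero]
      · intro h
        funext i
        apply Subtype.ext
        exact (hKchar _).1 h (r i) (hrI i)
    have hS1pi : S₁ (Fin t → N) := h₁.piFin N hS1N t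
    have hS1range : S₁ (LinearMap.range ψ) := h₁.subClosed _ _ hS1pi
    have hS1q : S₁ (Kbig ⧸ LinearMap.ker ψ) :=
      h₁.isoClosed _ _ ψ.quotKerEquivRange.symm hS1range
    exact h₁.isoClosed _ _
      ((Submodule.quotEquivOfEq _ _ hψker).trans (g.quotKerEquivOfSurjective hgsurj)) hS1q
  -- apply condition C_I for (S₂, S₁) to Q
  obtain ⟨P, hP2, hPq1⟩ := hC Q htorQ K₂ hK₂char ⟨P₁, hS2P₁, hS1quot⟩
  -- assemble: T = preimage of P in M
  set T : Submodule R M := P.comap N.mkQ with hTdef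
  have hNT : N ≤ T := by
    intro x hx
    show N.mkQ x ∈ P
    rw [Submodule.mkQ_apply, (Submodule.Quotient.mk_eq_zero N).2 hx]
    exact P.zero_mem
  have hmapT : T.map N.mkQ = P := by
    rw [hTdef, Submodule.map_comap_eq, Submodule.range_mkQ, top_inf_eq]
  -- T ∈ (S₁, S₂)
  have hT : ExtensionClass S₁ S₂ T := by
    refine ⟨N.comap T.subtype, ?_, ?_⟩
    · exact h₁.isoClosed _ _ (Submodule.comapSubtypeEquivOfLe hNT).symm hS1N
    · set f2 : T →ₗ[R] Q := N.mkQ ∘ₗ T.subtype with hf2def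
      have hker2 : LinearMap.ker f2 = N.comap T.subtype := by
        rw [hf2def, LinearMap.ker_comp, Submodule.ker_mkQ]
      have hrange2 : LinearMap.range f2 = P := by
        rw [hf2def, LinearMap.range_comp, Submodule.range_subtype, hmapT]
      exact h₂.isoClosed _ _
        (((LinearEquiv.ofEq _ _ hrange2.symm).trans f2.quotKerEquivRange.symm).trans
          (Submodule.quotEquivOfEq _ _ hker2)) hP2
  -- M ⧸ T ∈ (S₁, S₂)
  have hMT : ExtensionClass S₁ S₂ (M ⧸ T) := by
    have e : (Q ⧸ P) ≃ₗ[R] (M ⧸ T) :=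
      (Submodule.quotEquivOfEq _ _ hmapT.symm).trans
        (Submodule.quotientQuotientEquivQuotient N T hNT)
    have hS1MT : S₁ (M ⧸ T) := h₁.isoClosed _ _ e hPq1
    refine ⟨⊤, h₁.isoClosed _ _ Submodule.topEquiv.symm hS1MT, ?_⟩
    exact h₂.zeroMem _ (Submodule.Quotient.subsingleton_iff.2 rfl)
  exact hSerre.extClosed T M (M ⧸ T) T.subtype T.mkQ T.injective_subtype T.mkQ_surjective
    (by rw [Submodule.range_subtype, Submodule.ker_mkQ]) hT hMT
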